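/- arXiv:0808.3194 — 2 statements merged into one kernel-verified Lean document; each statement's English description precedes it below -/
import Mathlib

section
/- Let q₀ ∈ ℝ and define the coherent-q₀ density matrix coefficients ρ_{j,k} = e^{−q₀²/2} (q₀/√2)^{j+k} / √(j! k!) for j, k ∈ ℕ. Then for every φ ∈ ℝ and x ∈ ℝ, the double series ∑_{j ≥ 0} ∑_{k ≥ 0} ρ_{j,k} ψ_j(x) ψ_k(x) e^{−i(k−j)φ} converges absolutely and equals exp(−(x − q₀ cos φ)²)/√π. -/
/-- The physicists' Hermite polynomial `H_k(x) = (−1)^k e^{x²} (d^k/dx^k) e^{−x²}`. -/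
noncomputable def hermiteP (k : ℕ) (x : ℝ) : ℝ :=
  (-1 : ℝ) ^ k * Real.exp (x ^ 2) * iteratedDeriv k (fun y => Real.exp (-y ^ 2)) x

/-- The `k`-th Fock function `ψ_k(x) = (√π 2^k k!)^{−1/2} H_k(x) e^{−x²/2}`. -/
noncomputable def fock (k : ℕ) (x : ℝ) : ℝ :=
  (Real.sqrt (Real.sqrt Real.pi * 2 ^ k * Nat.factorial k))⁻¹ * hermiteP k x *
    Real.exp (-x ^ 2 / 2)

/-- The density matrix coefficients of the coherent-`q₀` state:
`ρ_{j,k} = e^{−q₀²/2} (q₀/√2)^{j+k} / √(j! k!)`. -/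
noncomputable def coherentCoeff (q₀ : ℝ) (j k : ℕ) : ℝ :=
  Real.exp (-q₀ ^ 2 / 2) * (q₀ / Real.sqrt 2) ^ (j + k) /
    Real.sqrt ((Nat.factorial j : ℝ) * (Nat.factorial k : ℝ))

open Polynomial in
noncomputable def hP : ℕ → Polynomial ℤ
  | 0 => 1
  | n + 1 => C 2 * X * hP n - derivative (hP n)

lemma iteratedDeriv_gaussR (n : ℕ) (x : ℝ) :
    iteratedDeriv n (fun y : ℝ => Real.exp (-y ^ 2)) x
      = (-1 : ℝ) ^ n * Polynomial.aeval x (hP n) * Real.exp (-x ^ 2) := by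
  induction n generalizing x with
  | zero => simp [hP]
  | succ n ih =>
    rw [iteratedDeriv_succ, funext ih]
    have hA : HasDerivAt (fun x : ℝ => Polynomial.aeval x (hP n))
        (Polynomial.aeval x (Polynomial.derivative (hP n))) x := Polynomial.hasDerivAt_aeval (hP n) x
    have hE : HasDerivAt (fun x : ℝ => Real.exp (-x ^ 2))
        (Real.exp (-x ^ 2) * -(2 * x)) x := by
      simpa using ((hasDerivAt_pow 2 x).neg).exp
    have h := ((hA.const_mul ((-1 : ℝ) ^ n)).mul hE)
    rw [show deriv (fun x : ℝ => (-1 : ℝ) ^ n * Polynomial.aeval x (hP n) * Real.exp (-x ^ 2)) x = _ from h.deriv]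
    simp only [hP, map_sub, map_mul, Polynomial.aeval_X, Polynomial.aeval_C, pow_succ, algebraMap_int_eq, eq_intCast, map_ofNat]
    ring

lemma iteratedDeriv_gaussC (n : ℕ) (z : ℂ) :
    iteratedDeriv n (fun y : ℂ => Complex.exp (-y ^ 2)) z
      = (-1 : ℂ) ^ n * Polynomial.aeval z (hP n) * Complex.exp (-z ^ 2) := by
  induction n generalizing z with
  | zero => simp [hP]
  | succ n ih =>
    rw [iteratedDeriv_succ, funext ih]
    have hA : HasDerivAt (fun z : ℂ => Polynomial.aeval z (hP n))
        (Polynomial.aeval z (Polynomial.derivative (hP n))) z := Polynomial.hasDerivAt_aeval (hP n) z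
    have hE : HasDerivAt (fun z : ℂ => Complex.exp (-z ^ 2))
        (Complex.exp (-z ^ 2) * -(2 * z)) z := by
      simpa using ((hasDerivAt_pow 2 z).neg).cexp
    have h := ((hA.const_mul ((-1 : ℂ) ^ n)).mul hE)
    rw [show deriv (fun x : ℂ => (-1 : ℂ) ^ n * Polynomial.aeval x (hP n) * Complex.exp (-x ^ 2)) z = _ from h.deriv]
    simp only [hP, map_sub, map_mul, Polynomial.aeval_X, Polynomial.aeval_C, pow_succ, algebraMap_int_eq, eq_intCast, map_ofNat]
    ring

lemma aeval_ofReal (p : Polynomial ℤ) (x : ℝ) :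
    Polynomial.aeval (x : ℂ) p = ((Polynomial.aeval x p : ℝ) : ℂ) := by
  simpa using (Polynomial.aeval_algHom_apply Complex.ofRealHom.toIntAlgHom x p)

lemma hermiteP_eq (k : ℕ) (x : ℝ) : hermiteP k x = Polynomial.aeval x (hP k) := by
  rw [hermiteP, iteratedDeriv_gaussR]
  have h1 : Real.exp (x ^ 2) * Real.exp (-x ^ 2) = 1 := by
    rw [← Real.exp_add]; simp
  have h2 : ((-1 : ℝ) ^ k) * ((-1 : ℝ) ^ k) = 1 := by
    rw [← pow_add, Even.neg_one_pow ⟨k, rfl⟩]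
  calc (-1 : ℝ) ^ k * Real.exp (x ^ 2) *
        ((-1) ^ k * Polynomial.aeval x (hP k) * Real.exp (-x ^ 2))
      = ((-1 : ℝ) ^ k * (-1) ^ k) * (Real.exp (x ^ 2) * Real.exp (-x ^ 2)) *
        Polynomial.aeval x (hP k) := by ring
    _ = Polynomial.aeval x (hP k) := by rw [h1, h2]; ring

lemma gen (x : ℝ) (t : ℂ) :
    HasSum (fun n : ℕ => Polynomial.aeval ((x : ℂ)) (hP n) * t ^ n / n.factorial)
      (Complex.exp (2 * x * t - t ^ 2)) := by
  have hf : Differentiable ℂ (fun z : ℂ => Complex.exp (-z ^ 2)) :=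
    ((differentiable_pow 2).neg).cexp
  have H := Complex.hasSum_taylorSeries_of_entire hf (x : ℂ) ((x : ℂ) - t)
  have H2 := H.mul_right (Complex.exp ((x : ℂ) ^ 2))
  have hxx : Complex.exp (-(x:ℂ) ^ 2) * Complex.exp ((x:ℂ) ^ 2) = 1 := by
    rw [← Complex.exp_add]; simp
  have hval : Complex.exp (-((x:ℂ) - t) ^ 2) * Complex.exp ((x : ℂ) ^ 2)
      = Complex.exp (2 * x * t - t ^ 2) := by
    rw [← Complex.exp_add]; ring_nf
  rw [hval] at H2
  have heq : (fun n : ℕ => (n.factorial : ℂ)⁻¹ • ((x : ℂ) - t - x) ^ n •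
        iteratedDeriv n (fun z : ℂ => Complex.exp (-z ^ 2)) (x : ℂ) * Complex.exp ((x:ℂ) ^ 2))
      = fun n : ℕ => Polynomial.aeval ((x : ℂ)) (hP n) * t ^ n / n.factorial := by
    funext n
    rw [iteratedDeriv_gaussC, show ((x : ℂ) - t - x) = -t by ring, smul_eq_mul, smul_eq_mul]
    have h2 : (-1 : ℂ) ^ n * (-t) ^ n = t ^ n := by rw [← mul_pow]; norm_num
    calc (n.factorial : ℂ)⁻¹ * ((-t) ^ n *
          ((-1) ^ n * Polynomial.aeval ((x : ℂ)) (hP n) * Complex.exp (-(x:ℂ) ^ 2))) *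
          Complex.exp ((x:ℂ) ^ 2)
        = ((-1 : ℂ) ^ n * (-t) ^ n) *
          (Complex.exp (-(x:ℂ) ^ 2) * Complex.exp ((x:ℂ) ^ 2)) *
          Polynomial.aeval ((x : ℂ)) (hP n) * (n.factorial : ℂ)⁻¹ := by ring
      _ = Polynomial.aeval ((x : ℂ)) (hP n) * t ^ n / n.factorial := by
          rw [hxx, h2]; ring
  rw [heq] at H2
  exact H2

lemma summable_abs_aux (x : ℝ) {s : ℝ} (hs : 0 ≤ s) :
    Summable (fun n : ℕ => |Polynomial.aeval x (hP n)| * s ^ n / n.factorial) := by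
  have h0 : (0:ℝ) < 2 * s + 1 := by linarith
  have h := ((gen x ((2 * s + 1 : ℝ) : ℂ)).summable.tendsto_atTop_zero).norm
  obtain ⟨M, hM⟩ := h.bddAbove_range
  have hratio : s / (2 * s + 1) < 1 := (div_lt_one h0).mpr (by linarith)
  refine Summable.of_nonneg_of_le (fun n => by positivity) (fun n => ?_)
    ((summable_geometric_of_lt_one (by positivity) hratio).mul_left M)
  have hnorm : ‖Polynomial.aeval ((x:ℂ)) (hP n) * ((2 * s + 1 : ℝ) : ℂ) ^ n / (n.factorial : ℂ)‖
      = |Polynomial.aeval x (hP n)| * (2 * s + 1) ^ n / n.factorial := by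
    have : Polynomial.aeval ((x:ℂ)) (hP n) * ((2 * s + 1 : ℝ) : ℂ) ^ n / (n.factorial : ℂ)
        = ((Polynomial.aeval x (hP n) * (2 * s + 1) ^ n / n.factorial : ℝ) : ℂ) := by
      rw [aeval_ofReal]; push_cast; ring
    rw [this, Complex.norm_real, Real.norm_eq_abs, abs_div, abs_mul, abs_pow,
      abs_of_pos h0, Nat.abs_cast]
  have hMn : |Polynomial.aeval x (hP n)| * (2 * s + 1) ^ n / n.factorial ≤ M := by
    rw [← hnorm]; exact hM ⟨n, rfl⟩
  have hfac : (0:ℝ) < n.factorial := by exact_mod_cast n.factorial_pos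
  have heq : |Polynomial.aeval x (hP n)| * s ^ n / n.factorial
      = (|Polynomial.aeval x (hP n)| * (2 * s + 1) ^ n / n.factorial) * (s / (2 * s + 1)) ^ n := by
    rw [div_pow]
    field_simp
  rw [heq]
  exact mul_le_mul_of_nonneg_right hMn (by positivity) |>.trans
    (le_of_eq rfl)

lemma fock_eq (n : ℕ) (x q₀ : ℝ) :
    (q₀ / Real.sqrt 2) ^ n / Real.sqrt n.factorial * fock n x
      = ((Real.sqrt (Real.sqrt Real.pi))⁻¹ * Real.exp (-x ^ 2 / 2)) *
        Polynomial.aeval x (hP n) * (q₀ / 2) ^ n / n.factorial := by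
  rw [fock, hermiteP_eq]
  have h2 : Real.sqrt (Real.sqrt Real.pi * 2 ^ n * n.factorial)
      = Real.sqrt (Real.sqrt Real.pi) * Real.sqrt 2 ^ n * Real.sqrt n.factorial := by
    have hp : Real.sqrt ((2:ℝ) ^ n) = Real.sqrt 2 ^ n := by
      rw [← Real.sqrt_sq (by positivity : (0:ℝ) ≤ Real.sqrt 2 ^ n)]
      congr 1
      rw [← pow_mul, mul_comm n 2, pow_mul, Real.sq_sqrt (by norm_num : (0:ℝ) ≤ 2)]
    rw [Real.sqrt_mul (by positivity), Real.sqrt_mul (by positivity), hp]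
  have e2 : (Real.sqrt 2) ^ n * (Real.sqrt 2) ^ n = 2 ^ n := by
    rw [← mul_pow, Real.mul_self_sqrt (by norm_num)]
  have ef : Real.sqrt n.factorial * Real.sqrt n.factorial = (n.factorial : ℝ) :=
    Real.mul_self_sqrt (by positivity)
  have hπ : (0:ℝ) < Real.sqrt (Real.sqrt Real.pi) := by
    have := Real.pi_pos; positivity
  have hf : (0:ℝ) < Real.sqrt n.factorial := by
    have : (0:ℝ) < (n.factorial:ℝ) := by exact_mod_cast n.factorial_pos
    positivity
  rw [h2, div_pow]
  field_simp
  ring_nf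
  rw [pow_mul, sq (Real.sqrt 2 ^ n), e2, sq (Real.sqrt ((n.factorial : ℕ) : ℝ)), ef]
  ring
  rw [mul_assoc _ ((1 / 2 : ℝ) ^ n), ← mul_pow]; norm_num

set_option maxHeartbeats 2000000 in
/-- For the coherent-`q₀` state, the double series
`∑_{j,k} ρ_{j,k} ψ_j(x) ψ_k(x) e^{−i(k−j)φ}` converges absolutely and equals the density
`exp(−(x − q₀ cos φ)²)/√π`. -/
theorem coherent_density (q₀ : ℝ) (φ x : ℝ) :
    Summable (fun p : ℕ × ℕ =>
      ‖((coherentCoeff q₀ p.1 p.2 * fock p.1 x * fock p.2 x : ℝ) : ℂ) *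
        Complex.exp (-Complex.I * (((p.2 : ℝ) - (p.1 : ℝ) : ℝ) : ℂ) * (φ : ℂ))‖) ∧
    ∑' p : ℕ × ℕ,
      ((coherentCoeff q₀ p.1 p.2 * fock p.1 x * fock p.2 x : ℝ) : ℂ) *
        Complex.exp (-Complex.I * (((p.2 : ℝ) - (p.1 : ℝ) : ℝ) : ℂ) * (φ : ℂ))
      = ((Real.exp (-(x - q₀ * Real.cos φ) ^ 2) / Real.sqrt Real.pi : ℝ) : ℂ) := by
  set t : ℂ := ((q₀ / 2 : ℝ) : ℂ) * Complex.exp (-(Complex.I * φ)) with ht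
  set a : ℝ := (Real.sqrt (Real.sqrt Real.pi))⁻¹ * Real.exp (-x ^ 2 / 2) with ha
  set g : ℕ → ℂ := fun k =>
    (((q₀ / Real.sqrt 2) ^ k / Real.sqrt k.factorial * fock k x : ℝ) : ℂ) *
      Complex.exp (-(Complex.I * k * φ)) with hgdef
  set e : ℝ := Real.exp (-q₀ ^ 2 / 2) with he
  set f : ℕ → ℂ := fun j => ((e : ℝ) : ℂ) * (starRingEnd ℂ) (g j) with hfdef
  -- HasSum for g
  have hgsum : HasSum g ((a : ℂ) * Complex.exp (2 * x * t - t ^ 2)) := by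
    have H := (gen x t).mul_left ((a : ℂ))
    have heq : (fun n : ℕ => (a : ℂ) * (Polynomial.aeval ((x : ℂ)) (hP n) * t ^ n / n.factorial))
        = g := by
      funext n
      have h1 : Complex.exp (-(Complex.I * (n : ℂ) * φ)) = Complex.exp (-(Complex.I * φ)) ^ n := by
        rw [← Complex.exp_nat_mul]; congr 1; push_cast; ring
      show _ = (((q₀ / Real.sqrt 2) ^ n / Real.sqrt n.factorial * fock n x : ℝ) : ℂ) *
          Complex.exp (-(Complex.I * n * φ))
      rw [fock_eq, h1, ht, aeval_ofReal, mul_pow, ha]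
      push_cast
      ring
    exact heq ▸ H
  -- summability of norms of g
  have hgn : Summable (fun k : ℕ => ‖g k‖) := by
    have hs : (0 : ℝ) ≤ |q₀| / 2 := by positivity
    refine Summable.of_nonneg_of_le (fun n => norm_nonneg _) (fun n => ?_)
      (((summable_abs_aux x hs).mul_left |a|))
    have h1 : ‖Complex.exp (-(Complex.I * (n : ℂ) * φ))‖ = 1 := by
      rw [Complex.norm_exp]
      simp
    show ‖(((q₀ / Real.sqrt 2) ^ n / Real.sqrt n.factorial * fock n x : ℝ) : ℂ) *
        Complex.exp (-(Complex.I * n * φ))‖ ≤ _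
    rw [norm_mul, h1, mul_one, Complex.norm_real, Real.norm_eq_abs, fock_eq, ha]
    rw [abs_div, abs_mul, abs_mul, abs_mul, abs_pow, abs_div, Nat.abs_cast]
    rw [show |(2:ℝ)| = 2 from by norm_num,
      abs_of_nonneg (show (0:ℝ) ≤ (Real.sqrt (Real.sqrt Real.pi))⁻¹ from by positivity),
      abs_of_nonneg (Real.exp_nonneg _)]
    apply le_of_eq
    ring
  -- conjugates
  have hconj : ∀ k : ℕ, (starRingEnd ℂ) (g k)
      = (((q₀ / Real.sqrt 2) ^ k / Real.sqrt k.factorial * fock k x : ℝ) : ℂ) *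
        Complex.exp (Complex.I * k * φ) := by
    intro k
    show (starRingEnd ℂ) ((((q₀ / Real.sqrt 2) ^ k / Real.sqrt k.factorial * fock k x : ℝ) : ℂ) *
        Complex.exp (-(Complex.I * k * φ))) = _
    rw [map_mul, Complex.conj_ofReal, ← Complex.exp_conj]
    congr 1
    simp [map_mul]
  have hfn : Summable (fun j : ℕ => ‖f j‖) := by
    have := hgn.mul_left ‖((e : ℝ) : ℂ)‖
    refine this.congr fun j => ?_
    show ‖((e : ℝ) : ℂ)‖ * ‖g j‖ = ‖((e : ℝ) : ℂ) * (starRingEnd ℂ) (g j)‖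
    rw [show ‖((e : ℝ) : ℂ) * (starRingEnd ℂ) (g j)‖ = ‖((e : ℝ) : ℂ)‖ * ‖g j‖ from by
      rw [norm_mul, RCLike.norm_conj]]
  -- the term identity
  have hterm : ∀ p : ℕ × ℕ, ((coherentCoeff q₀ p.1 p.2 * fock p.1 x * fock p.2 x : ℝ) : ℂ) *
      Complex.exp (-Complex.I * (((p.2 : ℝ) - (p.1 : ℝ) : ℝ) : ℂ) * (φ : ℂ)) = f p.1 * g p.2 := by
    rintro ⟨j, k⟩
    have hρ : coherentCoeff q₀ j k = e * ((q₀ / Real.sqrt 2) ^ j / Real.sqrt j.factorial) *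
        ((q₀ / Real.sqrt 2) ^ k / Real.sqrt k.factorial) := by
      rw [coherentCoeff, he, pow_add, Real.sqrt_mul (by positivity)]
      ring
    have hexp : Complex.exp (Complex.I * (j : ℂ) * φ) * Complex.exp (-(Complex.I * (k : ℂ) * φ))
        = Complex.exp (-Complex.I * (((k : ℝ) - (j : ℝ) : ℝ) : ℂ) * (φ : ℂ)) := by
      rw [← Complex.exp_add]; congr 1; push_cast; ring
    show ((coherentCoeff q₀ j k * fock j x * fock k x : ℝ) : ℂ) *
        Complex.exp (-Complex.I * (((k : ℝ) - (j : ℝ) : ℝ) : ℂ) * (φ : ℂ)) = f j * g k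
    simp only [hfdef]
    rw [hconj j, hρ, ← hexp]
    show _ = _ * (_ * Complex.exp (Complex.I * (j : ℂ) * φ)) *
      ((((q₀ / Real.sqrt 2) ^ k / Real.sqrt k.factorial * fock k x : ℝ) : ℂ) *
        Complex.exp (-(Complex.I * (k : ℂ) * φ)))
    push_cast
    ring
  have hsum2 : Summable (fun p : ℕ × ℕ => ‖f p.1‖ * ‖g p.2‖) :=
    hfn.mul_of_nonneg hgn (fun _ => norm_nonneg _) (fun _ => norm_nonneg _)
  constructor
  · refine hsum2.congr fun p => ?_
    rw [hterm p]
    simp only [hfdef, norm_mul]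
  · rw [tsum_congr hterm, ← tsum_mul_tsum_of_summable_norm hfn hgn]
    have hfsum : HasSum f (((e : ℝ) : ℂ) *
        ((a : ℂ) * Complex.exp ((starRingEnd ℂ) (2 * x * t - t ^ 2)))) := by
      have h1 := (Complex.hasSum_conj'.mpr hgsum)
      have h2 : (starRingEnd ℂ) ((a : ℂ) * Complex.exp (2 * x * t - t ^ 2))
          = (a : ℂ) * Complex.exp ((starRingEnd ℂ) (2 * x * t - t ^ 2)) := by
        rw [map_mul, Complex.conj_ofReal, ← Complex.exp_conj]
      exact h2 ▸ (h1.mul_left _)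
    rw [hfsum.tsum_eq, hgsum.tsum_eq]
    have htt : t * (starRingEnd ℂ) t = (((q₀ / 2) ^ 2 : ℝ) : ℂ) := by
      rw [Complex.mul_conj]
      have h : Complex.normSq t = (q₀ / 2) ^ 2 := by
        rw [ht, map_mul Complex.normSq, Complex.normSq_ofReal, Complex.normSq_eq_norm_sq,
          Complex.norm_exp]
        simp
        ring
      exact congrArg Complex.ofReal h
    have hts : t + (starRingEnd ℂ) t = ((q₀ * Real.cos φ : ℝ) : ℂ) := by
      rw [Complex.add_conj]
      have : t.re = q₀ / 2 * Real.cos φ := by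
        rw [ht]
        simp [Complex.mul_re, Complex.exp_re, Real.cos_neg]
      rw [this]
      push_cast
      ring
    have hcu : (starRingEnd ℂ) (2 * (x : ℂ) * t - t ^ 2)
        = 2 * (x : ℂ) * ((starRingEnd ℂ) t) - ((starRingEnd ℂ) t) ^ 2 := by
      simp only [map_sub, map_mul, map_pow, Complex.conj_ofReal, map_ofNat]
    have hu : (2 * (x : ℂ) * t - t ^ 2) + (starRingEnd ℂ) (2 * (x : ℂ) * t - t ^ 2)
        = ((2 * x * (q₀ * Real.cos φ) - (q₀ * Real.cos φ) ^ 2 + 2 * (q₀ / 2) ^ 2 : ℝ) : ℂ) := by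
      rw [hcu]
      have expand : (2 * (x : ℂ) * t - t ^ 2) +
            (2 * (x : ℂ) * ((starRingEnd ℂ) t) - ((starRingEnd ℂ) t) ^ 2)
          = 2 * (x : ℂ) * (t + (starRingEnd ℂ) t) -
            ((t + (starRingEnd ℂ) t) ^ 2 - 2 * (t * (starRingEnd ℂ) t)) := by ring
      rw [expand, hts, htt]
      push_cast
      ring
    have hππ : (Real.sqrt (Real.sqrt Real.pi))⁻¹ * (Real.sqrt (Real.sqrt Real.pi))⁻¹
        = (Real.sqrt Real.pi)⁻¹ := by
      rw [← mul_inv, Real.mul_self_sqrt (Real.sqrt_nonneg _)]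
    calc (((e : ℝ) : ℂ) * ((a : ℂ) * Complex.exp ((starRingEnd ℂ) (2 * x * t - t ^ 2)))) *
          ((a : ℂ) * Complex.exp (2 * x * t - t ^ 2))
        = (((e : ℝ) : ℂ) * (a : ℂ) * (a : ℂ)) *
          (Complex.exp ((2 * (x : ℂ) * t - t ^ 2) +
            (starRingEnd ℂ) (2 * (x : ℂ) * t - t ^ 2))) := by
          rw [Complex.exp_add]; ring
      _ = ((e * a * a * Real.exp (2 * x * (q₀ * Real.cos φ) - (q₀ * Real.cos φ) ^ 2 +
            2 * (q₀ / 2) ^ 2) : ℝ) : ℂ) := by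
          rw [hu, ← Complex.ofReal_exp]
          push_cast
          ring
      _ = ((Real.exp (-(x - q₀ * Real.cos φ) ^ 2) / Real.sqrt Real.pi : ℝ) : ℂ) := by
          have hcomb : Real.exp (-q₀ ^ 2 / 2) * Real.exp (-x ^ 2 / 2) * Real.exp (-x ^ 2 / 2) *
              Real.exp (2 * x * (q₀ * Real.cos φ) - (q₀ * Real.cos φ) ^ 2 + 2 * (q₀ / 2) ^ 2)
              = Real.exp (-(x - q₀ * Real.cos φ) ^ 2) := by
            rw [← Real.exp_add, ← Real.exp_add, ← Real.exp_add]
            congr 1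
            ring
          have hre : e * a * a * Real.exp (2 * x * (q₀ * Real.cos φ) - (q₀ * Real.cos φ) ^ 2 +
              2 * (q₀ / 2) ^ 2) = Real.exp (-(x - q₀ * Real.cos φ) ^ 2) / Real.sqrt Real.pi := by
            rw [he, ha]
            calc Real.exp (-q₀ ^ 2 / 2) * ((Real.sqrt (Real.sqrt Real.pi))⁻¹ *
                  Real.exp (-x ^ 2 / 2)) * ((Real.sqrt (Real.sqrt Real.pi))⁻¹ *
                  Real.exp (-x ^ 2 / 2)) * Real.exp (2 * x * (q₀ * Real.cos φ) -
                  (q₀ * Real.cos φ) ^ 2 + 2 * (q₀ / 2) ^ 2)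
                = ((Real.sqrt (Real.sqrt Real.pi))⁻¹ * (Real.sqrt (Real.sqrt Real.pi))⁻¹) *
                  (Real.exp (-q₀ ^ 2 / 2) * Real.exp (-x ^ 2 / 2) * Real.exp (-x ^ 2 / 2) *
                    Real.exp (2 * x * (q₀ * Real.cos φ) - (q₀ * Real.cos φ) ^ 2 +
                      2 * (q₀ / 2) ^ 2)) := by ring
              _ = Real.exp (-(x - q₀ * Real.cos φ) ^ 2) / Real.sqrt Real.pi := by
                  rw [hππ, hcomb, ← div_eq_inv_mul]
          exact_mod_cast congrArg Complex.ofReal hre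
end

section
/- Let q₀ > 0 and define the Schrödinger cat-q₀ density matrix coefficients ρ_{j,k} = 2 (q₀/√2)^{j+k} / ( √(j! k!) (e^{q₀²/2} + e^{−q₀²/2}) ) when j and k are both even, and ρ_{j,k} = 0 otherwise. Then for every φ ∈ ℝ and x ∈ ℝ, the double series ∑_{j ≥ 0} ∑_{k ≥ 0} ρ_{j,k} ψ_j(x) ψ_k(x) e^{−i(k−j)φ} converges absolutely and equals ( exp(−(x − q₀ cos φ)²) + exp(−(x + q₀ cos φ)²) + 2 cos(2 q₀ x sin φ) exp(−x² − q₀² cos² φ) ) / ( 2√π (1 + exp(−q₀²)) ). -/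
/-- The density matrix coefficients of the Schrödinger cat-`q₀` state:
`ρ_{j,k} = 2 (q₀/√2)^{j+k} / (√(j! k!) (e^{q₀²/2} + e^{−q₀²/2}))` when `j` and `k` are both
even, and `0` otherwise. -/
noncomputable def catCoeff (q₀ : ℝ) (j k : ℕ) : ℝ :=
  if Even j ∧ Even k then
    2 * (q₀ / Real.sqrt 2) ^ (j + k) /
      (Real.sqrt ((Nat.factorial j : ℝ) * (Nat.factorial k : ℝ)) *
        (Real.exp (q₀ ^ 2 / 2) + Real.exp (-q₀ ^ 2 / 2)))
  else 0

open Polynomial in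
noncomputable def catQP : ℕ → Polynomial ℤ
  | 0 => 1
  | n + 1 => derivative (catQP n) - 2 * X * catQP n

open Polynomial in
lemma catQP_real (n : ℕ) (x : ℝ) :
    iteratedDeriv n (fun y => Real.exp (-y ^ 2)) x = aeval x (catQP n) * Real.exp (-x ^ 2) := by
  induction n generalizing x with
  | zero => simp [catQP]
  | succ n ih =>
    rw [iteratedDeriv_succ]
    rw [funext ih]
    have h2 : HasDerivAt (fun y : ℝ => aeval y (catQP n) * Real.exp (-y ^ 2))
        (aeval x (derivative (catQP n)) * Real.exp (-x ^ 2)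
          + aeval x (catQP n) * (Real.exp (-x ^ 2) * (-2 * x))) x := by
      have hp := (catQP n).hasDerivAt_aeval (R := ℤ) x
      have he : HasDerivAt (fun y : ℝ => Real.exp (-y ^ 2)) (Real.exp (-x ^ 2) * (-2 * x)) x := by
        have : HasDerivAt (fun y : ℝ => -y ^ 2) (-2 * x) x := by
          simpa using ((hasDerivAt_pow 2 x).fun_neg)
        simpa using this.exp
      exact hp.mul he
    rw [h2.deriv, catQP]
    simp only [map_sub, map_mul, map_ofNat, aeval_X]
    ring

open Polynomial in
lemma catQP_complex (n : ℕ) (x : ℂ) :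
    iteratedDeriv n (fun y => Complex.exp (-y ^ 2)) x = aeval x (catQP n) * Complex.exp (-x ^ 2) := by
  induction n generalizing x with
  | zero => simp [catQP]
  | succ n ih =>
    rw [iteratedDeriv_succ]
    rw [funext ih]
    have h2 : HasDerivAt (fun y : ℂ => aeval y (catQP n) * Complex.exp (-y ^ 2))
        (aeval x (derivative (catQP n)) * Complex.exp (-x ^ 2)
          + aeval x (catQP n) * (Complex.exp (-x ^ 2) * (-2 * x))) x := by
      have hp := (catQP n).hasDerivAt_aeval (R := ℤ) x
      have he : HasDerivAt (fun y : ℂ => Complex.exp (-y ^ 2)) (Complex.exp (-x ^ 2) * (-2 * x)) x := by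
        have : HasDerivAt (fun y : ℂ => -y ^ 2) (-2 * x) x := by
          simpa using ((hasDerivAt_pow 2 x).fun_neg)
        simpa using this.cexp
      exact hp.mul he
    rw [h2.deriv, catQP]
    simp only [map_sub, map_mul, map_ofNat, aeval_X]
    ring

open Polynomial in
lemma catQP_genfun (x : ℝ) (t : ℂ) :
    HasSum (fun n : ℕ => t ^ n / (Nat.factorial n : ℂ) * ((-1 : ℂ) ^ n * aeval (x : ℂ) (catQP n)))
      (Complex.exp (2 * x * t - t ^ 2)) := by
  have hent : Differentiable ℂ (fun z : ℂ => Complex.exp (-z ^ 2)) := by fun_prop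
  have H := Complex.hasSum_taylorSeries_of_entire hent (x : ℂ) ((x : ℂ) - t)
  have H2 := H.mul_left (Complex.exp ((x:ℂ) ^ 2))
  have key : Complex.exp ((x:ℂ)^2) * Complex.exp (-((x:ℂ) - t)^2) = Complex.exp (2*x*t - t^2) := by
    rw [← Complex.exp_add]; ring_nf
  rw [key] at H2
  convert H2 using 2 with n
  · rfl
  rw [catQP_complex]
  rw [smul_eq_mul, smul_eq_mul]
  have hx : (x:ℂ) - t - (x:ℂ) = -t := by ring
  have he : Complex.exp (-(x:ℂ)^2) * Complex.exp ((x:ℂ)^2) = 1 := by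
    rw [← Complex.exp_add]; simp
  rw [hx, show Complex.exp ((x:ℂ)^2) * (((Nat.factorial n : ℂ))⁻¹ * ((-t)^n *
      ((aeval (x:ℂ) (catQP n)) * Complex.exp (-(x:ℂ)^2)))) =
      ((-t)^n * (aeval (x:ℂ) (catQP n)) * ((Nat.factorial n : ℂ))⁻¹) *
      (Complex.exp (-(x:ℂ)^2) * Complex.exp ((x:ℂ)^2)) from by ring, he, mul_one, neg_pow]
  ring

open Polynomial in
lemma hermiteP_eq_s17 (k : ℕ) (x : ℝ) :
    hermiteP k x = (-1 : ℝ) ^ k * aeval x (catQP k) := by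
  unfold hermiteP
  rw [catQP_real, show (-1:ℝ)^k * Real.exp (x^2) * (aeval x (catQP k) * Real.exp (-x^2))
      = (-1:ℝ)^k * aeval x (catQP k) * (Real.exp (x^2) * Real.exp (-x^2)) from by ring,
    ← Real.exp_add]
  simp

open Polynomial in
lemma hermiteP_cast (k : ℕ) (x : ℝ) :
    ((hermiteP k x : ℝ) : ℂ) = (-1 : ℂ) ^ k * aeval (x : ℂ) (catQP k) := by
  rw [hermiteP_eq_s17]
  push_cast
  congr 1
  exact (Polynomial.aeval_algHom_apply Complex.ofRealHom.toIntAlgHom x (catQP k)).symm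

lemma hermite_genfun (x : ℝ) (t : ℂ) :
    HasSum (fun n : ℕ => t ^ n / (Nat.factorial n : ℂ) * ((hermiteP n x : ℝ) : ℂ))
      (Complex.exp (2 * x * t - t ^ 2)) := by
  have H := catQP_genfun x t
  convert H using 2 with n
  rw [hermiteP_cast]

/-- For the Schrödinger cat-`q₀` state, the double series
`∑_{j,k} ρ_{j,k} ψ_j(x) ψ_k(x) e^{−i(k−j)φ}` converges absolutely and equals the density
`(exp(−(x − q₀cos φ)²) + exp(−(x + q₀cos φ)²) + 2cos(2q₀x sin φ)exp(−x² − q₀²cos²φ)) /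
(2√π(1 + exp(−q₀²)))`. -/
theorem cat_density (q₀ : ℝ) (hq₀ : 0 < q₀) (φ x : ℝ) :
    Summable (fun p : ℕ × ℕ =>
      ‖((catCoeff q₀ p.1 p.2 * fock p.1 x * fock p.2 x : ℝ) : ℂ) *
        Complex.exp (-Complex.I * (((p.2 : ℝ) - (p.1 : ℝ) : ℝ) : ℂ) * (φ : ℂ))‖) ∧
    ∑' p : ℕ × ℕ,
      ((catCoeff q₀ p.1 p.2 * fock p.1 x * fock p.2 x : ℝ) : ℂ) *
        Complex.exp (-Complex.I * (((p.2 : ℝ) - (p.1 : ℝ) : ℝ) : ℂ) * (φ : ℂ))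
      = (((Real.exp (-(x - q₀ * Real.cos φ) ^ 2) + Real.exp (-(x + q₀ * Real.cos φ) ^ 2) +
            2 * Real.cos (2 * q₀ * x * Real.sin φ) *
              Real.exp (-x ^ 2 - q₀ ^ 2 * Real.cos φ ^ 2)) /
          (2 * Real.sqrt Real.pi * (1 + Real.exp (-q₀ ^ 2))) : ℝ) : ℂ) := by
  -- abbreviations
  set D : ℝ := Real.exp (q₀ ^ 2 / 2) + Real.exp (-q₀ ^ 2 / 2) with hDdef
  have hD : 0 < D := by positivity
  set Cr : ℝ := Real.sqrt 2 * Real.exp (-x ^ 2 / 2) /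
    (Real.sqrt D * Real.sqrt (Real.sqrt Real.pi)) with hCrdef
  set c : ℕ → ℝ := fun k => if Even k then
      Real.sqrt 2 * (q₀ / Real.sqrt 2) ^ k / (Real.sqrt (Nat.factorial k : ℝ) * Real.sqrt D)
    else 0 with hcdef
  set t : ℂ := ((q₀ / 2 : ℝ) : ℂ) * Complex.exp (-(Complex.I * (φ : ℂ))) with htdef
  set s : ℂ := ((q₀ / 2 : ℝ) : ℂ) * Complex.exp (Complex.I * (φ : ℂ)) with hsdef
  set S : ℂ := ((Cr : ℝ) : ℂ) / 2 *
    (Complex.exp (2 * (x : ℂ) * t - t ^ 2) + Complex.exp (2 * (x : ℂ) * (-t) - (-t) ^ 2))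
    with hSdef
  set g : ℕ → ℂ := fun k =>
    ((c k * fock k x : ℝ) : ℂ) * Complex.exp (-(Complex.I * (k : ℂ) * (φ : ℂ))) with hgdef
  set f : ℕ → ℂ := fun j =>
    ((c j * fock j x : ℝ) : ℂ) * Complex.exp (Complex.I * (j : ℂ) * (φ : ℂ)) with hfdef
  -- basic positivity facts
  have hpi : (0 : ℝ) < Real.sqrt Real.pi := Real.sqrt_pos.mpr Real.pi_pos
  have hfac : ∀ k : ℕ, (0 : ℝ) < (Nat.factorial k : ℝ) := fun k =>
    Nat.cast_pos.mpr (Nat.factorial_pos k)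
  -- factorization of catCoeff
  have hcd : ∀ j k : ℕ, catCoeff q₀ j k = c j * c k := by
    intro j k
    unfold catCoeff
    rw [hcdef]
    dsimp only
    rw [← hDdef]
    by_cases hj : Even j
    · by_cases hk : Even k
      · rw [if_pos ⟨hj, hk⟩, if_pos hj, if_pos hk]
        rw [Real.sqrt_mul (le_of_lt (hfac j)), pow_add]
        have e2 : Real.sqrt 2 * Real.sqrt 2 = 2 := Real.mul_self_sqrt (by norm_num)
        have eD : Real.sqrt D * Real.sqrt D = D := Real.mul_self_sqrt hD.le
        have h1 : Real.sqrt (Nat.factorial j : ℝ) ≠ 0 := by positivity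
        have h2 : Real.sqrt (Nat.factorial k : ℝ) ≠ 0 := by positivity
        have h3 : Real.sqrt D ≠ 0 := by positivity
        rw [div_mul_div_comm]
        congr 1
        · linear_combination (-(q₀ / Real.sqrt 2) ^ j * (q₀ / Real.sqrt 2) ^ k) * e2
        · linear_combination (-Real.sqrt (Nat.factorial j : ℝ) * Real.sqrt (Nat.factorial k : ℝ)) * eD
      · rw [if_neg (by tauto), if_neg hk, mul_zero]
    · rw [if_neg (by tauto), if_neg hj, zero_mul]
  -- coefficient computation in the even case
  have h2k : ∀ k : ℕ, Real.sqrt ((2:ℝ) ^ k) = Real.sqrt 2 ^ k := by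
    intro k
    rw [show (2:ℝ) ^ k = (Real.sqrt 2 ^ k) ^ 2 from by
        rw [← pow_mul, mul_comm, pow_mul, Real.sq_sqrt (by norm_num)],
      Real.sqrt_sq (by positivity)]
  have hfock_split : ∀ k : ℕ,
      (Real.sqrt (Real.sqrt Real.pi * 2 ^ k * (Nat.factorial k : ℝ)))⁻¹ =
        (Real.sqrt (Real.sqrt Real.pi))⁻¹ * (Real.sqrt 2 ^ k)⁻¹ *
          (Real.sqrt (Nat.factorial k : ℝ))⁻¹ := by
    intro k
    rw [Real.sqrt_mul (by positivity), Real.sqrt_mul (Real.sqrt_nonneg _), h2k, mul_inv, mul_inv]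
  have hcoef : ∀ k : ℕ, Even k →
      c k * fock k x = Cr * ((q₀ / 2) ^ k / (Nat.factorial k : ℝ)) * hermiteP k x := by
    intro k hk
    rw [hcdef]
    dsimp only
    rw [if_pos hk, fock, hfock_split, hCrdef]
    have e1 : Real.sqrt 2 ^ k * Real.sqrt 2 ^ k = 2 ^ k := by
      rw [← mul_pow, Real.mul_self_sqrt (by norm_num)]
    have e2 : Real.sqrt (Nat.factorial k : ℝ) * Real.sqrt (Nat.factorial k : ℝ)
        = (Nat.factorial k : ℝ) := Real.mul_self_sqrt (hfac k).le
    have e3 : (q₀ / 2) ^ k * (Real.sqrt 2 ^ k * Real.sqrt 2 ^ k) = q₀ ^ k := by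
      rw [e1, div_pow, div_mul_cancel₀]
      positivity
    have e4 : (q₀ / Real.sqrt 2) ^ k * Real.sqrt 2 ^ k = q₀ ^ k := by
      rw [div_pow, div_mul_cancel₀]
      positivity
    have hs2 : Real.sqrt 2 ≠ 0 := by positivity
    have hsD : Real.sqrt D ≠ 0 := by positivity
    have hsp : Real.sqrt (Real.sqrt Real.pi) ≠ 0 := by positivity
    have hsk : Real.sqrt (Nat.factorial k : ℝ) ≠ 0 := by positivity
    have hs2k : Real.sqrt 2 ^ k ≠ 0 := by positivity
    rw [div_pow, div_pow]
    field_simp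
    have E1 : Real.sqrt 2 ^ (k * 2) = 2 ^ k := by
      rw [mul_comm k 2, pow_mul, Real.sq_sqrt (by norm_num : (0:ℝ) ≤ 2)]
    have E2 : Real.sqrt (Nat.factorial k : ℝ) ^ 2 = (Nat.factorial k : ℝ) :=
      Real.sq_sqrt (hfac k).le
    linear_combination
      (-(hermiteP k x * Real.sqrt (Nat.factorial k : ℝ) ^ 2)) * E1 - (hermiteP k x * 2 ^ k) * E2
  -- the terms of g as even part of the Hermite generating series
  have hg : ∀ k : ℕ, g k = ((Cr : ℝ) : ℂ) / 2 *
      (t ^ k / (Nat.factorial k : ℂ) * ((hermiteP k x : ℝ) : ℂ) +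
        (-t) ^ k / (Nat.factorial k : ℂ) * ((hermiteP k x : ℝ) : ℂ)) := by
    intro k
    rw [hgdef]
    dsimp only
    by_cases hk : Even k
    · rw [hcoef k hk, hk.neg_pow, htdef]
      rw [show -(Complex.I * (k : ℂ) * (φ : ℂ)) = (k : ℕ) * (-(Complex.I * (φ : ℂ))) from by
          push_cast; ring, Complex.exp_nat_mul, mul_pow]
      push_cast
      ring
    · have hc0 : c k = 0 := by rw [hcdef]; dsimp only; rw [if_neg hk]
      rw [hc0, (Nat.not_even_iff_odd.mp hk).neg_pow]
      push_cast
      ring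
  have hSg : HasSum g S := by
    have h1 := hermite_genfun x t
    have h2 := hermite_genfun x (-t)
    have h3 := (h1.add h2).mul_left (((Cr : ℝ) : ℂ) / 2)
    rw [hSdef]
    exact h3.congr_fun hg
  have hfg : ∀ j : ℕ, f j = (starRingEnd ℂ) (g j) := by
    intro j
    rw [hfdef, hgdef]
    dsimp only
    rw [map_mul, Complex.conj_ofReal, ← Complex.exp_conj]
    congr 2
    simp [map_mul, Complex.conj_ofReal]
  have hSf : HasSum f ((starRingEnd ℂ) S) :=
    (Complex.hasSum_conj'.mpr hSg).congr_fun hfg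
  have hgn : Summable fun k => ‖g k‖ := summable_norm_iff.mpr hSg.summable
  have hfn : Summable fun j => ‖f j‖ := by
    refine hgn.congr fun j => ?_
    rw [hfg j, RCLike.norm_conj]
  -- the summand factorizes
  have hterm : ∀ p : ℕ × ℕ,
      ((catCoeff q₀ p.1 p.2 * fock p.1 x * fock p.2 x : ℝ) : ℂ) *
        Complex.exp (-Complex.I * (((p.2 : ℝ) - (p.1 : ℝ) : ℝ) : ℂ) * (φ : ℂ))
      = f p.1 * g p.2 := by
    intro p
    rw [hcd p.1 p.2, hfdef, hgdef]
    dsimp only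
    rw [show -Complex.I * ((((p.2 : ℕ) : ℝ) - ((p.1 : ℕ) : ℝ) : ℝ) : ℂ) * (φ : ℂ)
        = Complex.I * (p.1 : ℂ) * (φ : ℂ) + -(Complex.I * (p.2 : ℂ) * (φ : ℂ)) from by
        push_cast; ring, Complex.exp_add]
    push_cast
    ring
  have hfinal : (starRingEnd ℂ) S * S =
      (((Real.exp (-(x - q₀ * Real.cos φ) ^ 2) + Real.exp (-(x + q₀ * Real.cos φ) ^ 2) +
            2 * Real.cos (2 * q₀ * x * Real.sin φ) *
              Real.exp (-x ^ 2 - q₀ ^ 2 * Real.cos φ ^ 2)) /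
          (2 * Real.sqrt Real.pi * (1 + Real.exp (-q₀ ^ 2))) : ℝ) : ℂ) := by
    have hct : (starRingEnd ℂ) t = s := by
      rw [htdef, hsdef, map_mul, Complex.conj_ofReal, ← Complex.exp_conj]
      congr 2
      simp [map_mul, Complex.conj_ofReal]
    have hconjS : (starRingEnd ℂ) S = ((Cr : ℝ) : ℂ) / 2 *
        (Complex.exp (2 * (x : ℂ) * s - s ^ 2) +
          Complex.exp (2 * (x : ℂ) * (-s) - (-s) ^ 2)) := by
      rw [hSdef]
      simp only [map_mul, map_add, map_div₀, map_sub, map_pow, map_neg, map_ofNat,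
        Complex.conj_ofReal, ← Complex.exp_conj, hct]
    have ht' : t = ((q₀ / 2 : ℝ) : ℂ) *
        (((Real.cos φ : ℝ) : ℂ) - ((Real.sin φ : ℝ) : ℂ) * Complex.I) := by
      rw [htdef]
      congr 1
      rw [show -(Complex.I * (φ : ℂ)) = (((-φ : ℝ) : ℂ)) * Complex.I from by push_cast; ring,
        Complex.exp_mul_I, ← Complex.ofReal_cos, ← Complex.ofReal_sin]
      push_cast [Real.cos_neg, Real.sin_neg]
      ring
    have hs' : s = ((q₀ / 2 : ℝ) : ℂ) *
        (((Real.cos φ : ℝ) : ℂ) + ((Real.sin φ : ℝ) : ℂ) * Complex.I) := by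
      rw [hsdef]
      congr 1
      rw [show Complex.I * (φ : ℂ) = ((φ : ℝ) : ℂ) * Complex.I from by push_cast; ring,
        Complex.exp_mul_I, ← Complex.ofReal_cos, ← Complex.ofReal_sin]
    have hpy : Complex.cos (φ : ℂ) ^ 2 + Complex.sin (φ : ℂ) ^ 2 = 1 :=
      Complex.cos_sq_add_sin_sq _
    have hI := Complex.I_sq
    have hts : t * s = ((q₀ ^ 2 / 4 : ℝ) : ℂ) := by
      rw [ht', hs']
      push_cast
      linear_combination ((q₀ : ℂ) ^ 2 / 4) * hpy - ((q₀ : ℂ) ^ 2 / 4) * Complex.sin (φ : ℂ) ^ 2 * hI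
    have hsum : t + s = ((q₀ * Real.cos φ : ℝ) : ℂ) := by
      rw [ht', hs']; push_cast; ring
    have hdiff : s - t = Complex.I * ((q₀ * Real.sin φ : ℝ) : ℂ) := by
      rw [ht', hs']; push_cast; ring
    have haa : (2 * (x : ℂ) * s - s ^ 2) + (2 * (x : ℂ) * t - t ^ 2)
        = ((2 * q₀ * x * Real.cos φ - q₀ ^ 2 * Real.cos φ ^ 2 + q₀ ^ 2 / 2 : ℝ) : ℂ) := by
      rw [show (2 * (x : ℂ) * s - s ^ 2) + (2 * (x : ℂ) * t - t ^ 2)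
          = 2 * (x : ℂ) * (t + s) - (t + s) ^ 2 + 2 * (t * s) from by ring, hsum, hts]
      push_cast; ring
    have hbb : (2 * (x : ℂ) * (-s) - (-s) ^ 2) + (2 * (x : ℂ) * (-t) - (-t) ^ 2)
        = ((-(2 * q₀ * x * Real.cos φ) - q₀ ^ 2 * Real.cos φ ^ 2 + q₀ ^ 2 / 2 : ℝ) : ℂ) := by
      rw [show (2 * (x : ℂ) * (-s) - (-s) ^ 2) + (2 * (x : ℂ) * (-t) - (-t) ^ 2)
          = -(2 * (x : ℂ)) * (t + s) - (t + s) ^ 2 + 2 * (t * s) from by ring, hsum, hts]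
      push_cast; ring
    have hab : (2 * (x : ℂ) * s - s ^ 2) + (2 * (x : ℂ) * (-t) - (-t) ^ 2)
        = ((2 * q₀ * x * Real.sin φ : ℝ) : ℂ) * Complex.I
          + ((q₀ ^ 2 / 2 - q₀ ^ 2 * Real.cos φ ^ 2 : ℝ) : ℂ) := by
      rw [show (2 * (x : ℂ) * s - s ^ 2) + (2 * (x : ℂ) * (-t) - (-t) ^ 2)
          = 2 * (x : ℂ) * (s - t) - (t + s) ^ 2 + 2 * (t * s) from by ring, hdiff, hsum, hts]
      push_cast; ring
    have hba : (2 * (x : ℂ) * (-s) - (-s) ^ 2) + (2 * (x : ℂ) * t - t ^ 2)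
        = ((-(2 * q₀ * x * Real.sin φ) : ℝ) : ℂ) * Complex.I
          + ((q₀ ^ 2 / 2 - q₀ ^ 2 * Real.cos φ ^ 2 : ℝ) : ℂ) := by
      rw [show (2 * (x : ℂ) * (-s) - (-s) ^ 2) + (2 * (x : ℂ) * t - t ^ 2)
          = -(2 * (x : ℂ)) * (s - t) - (t + s) ^ 2 + 2 * (t * s) from by ring, hdiff, hsum, hts]
      push_cast; ring
    have hcross : Complex.exp (((2 * q₀ * x * Real.sin φ : ℝ) : ℂ) * Complex.I
          + ((q₀ ^ 2 / 2 - q₀ ^ 2 * Real.cos φ ^ 2 : ℝ) : ℂ))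
        + Complex.exp (((-(2 * q₀ * x * Real.sin φ) : ℝ) : ℂ) * Complex.I
          + ((q₀ ^ 2 / 2 - q₀ ^ 2 * Real.cos φ ^ 2 : ℝ) : ℂ))
        = ((2 * Real.cos (2 * q₀ * x * Real.sin φ)
            * Real.exp (q₀ ^ 2 / 2 - q₀ ^ 2 * Real.cos φ ^ 2) : ℝ) : ℂ) := by
      rw [Complex.exp_add, Complex.exp_add, Complex.exp_mul_I, Complex.exp_mul_I,
        ← Complex.ofReal_cos, ← Complex.ofReal_sin, ← Complex.ofReal_cos, ← Complex.ofReal_sin,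
        ← Complex.ofReal_exp]
      push_cast [Real.cos_neg, Real.sin_neg]
      ring
    rw [hconjS, hSdef]
    rw [show ((Cr : ℝ) : ℂ) / 2 * (Complex.exp (2 * (x : ℂ) * s - s ^ 2)
          + Complex.exp (2 * (x : ℂ) * (-s) - (-s) ^ 2))
        * (((Cr : ℝ) : ℂ) / 2 * (Complex.exp (2 * (x : ℂ) * t - t ^ 2)
          + Complex.exp (2 * (x : ℂ) * (-t) - (-t) ^ 2)))
        = ((Cr : ℝ) : ℂ) ^ 2 / 4 *
          (Complex.exp (2 * (x : ℂ) * s - s ^ 2) * Complex.exp (2 * (x : ℂ) * t - t ^ 2)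
          + (Complex.exp (2 * (x : ℂ) * s - s ^ 2) * Complex.exp (2 * (x : ℂ) * (-t) - (-t) ^ 2)
          + Complex.exp (2 * (x : ℂ) * (-s) - (-s) ^ 2) * Complex.exp (2 * (x : ℂ) * t - t ^ 2))
          + Complex.exp (2 * (x : ℂ) * (-s) - (-s) ^ 2)
            * Complex.exp (2 * (x : ℂ) * (-t) - (-t) ^ 2)) from by ring]
    rw [← Complex.exp_add, ← Complex.exp_add, ← Complex.exp_add, ← Complex.exp_add,
      haa, hab, hba, hbb, hcross, ← Complex.ofReal_exp, ← Complex.ofReal_exp]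
    -- now everything is real
    have hK : Real.exp (q₀ ^ 2 / 2) ≠ 0 := Real.exp_ne_zero _
    have hCr2 : Cr ^ 2 = 2 * Real.exp (-x ^ 2) / (D * Real.sqrt Real.pi) := by
      rw [hCrdef, div_pow, mul_pow, mul_pow, Real.sq_sqrt (by norm_num : (0:ℝ) ≤ 2),
        Real.sq_sqrt hD.le, Real.sq_sqrt (Real.sqrt_nonneg _),
        show Real.exp (-x ^ 2 / 2) ^ 2 = Real.exp (-x ^ 2) from by
          rw [sq, ← Real.exp_add]; congr 1; ring]
    have h1 : Real.exp (-x ^ 2)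
          * Real.exp (2 * q₀ * x * Real.cos φ - q₀ ^ 2 * Real.cos φ ^ 2 + q₀ ^ 2 / 2)
        = Real.exp (-(x - q₀ * Real.cos φ) ^ 2) * Real.exp (q₀ ^ 2 / 2) := by
      rw [← Real.exp_add, ← Real.exp_add]; congr 1; ring
    have h2 : Real.exp (-x ^ 2)
          * Real.exp (-(2 * q₀ * x * Real.cos φ) - q₀ ^ 2 * Real.cos φ ^ 2 + q₀ ^ 2 / 2)
        = Real.exp (-(x + q₀ * Real.cos φ) ^ 2) * Real.exp (q₀ ^ 2 / 2) := by
      rw [← Real.exp_add, ← Real.exp_add]; congr 1; ring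
    have h3 : Real.exp (-x ^ 2) * Real.exp (q₀ ^ 2 / 2 - q₀ ^ 2 * Real.cos φ ^ 2)
        = Real.exp (-x ^ 2 - q₀ ^ 2 * Real.cos φ ^ 2) * Real.exp (q₀ ^ 2 / 2) := by
      rw [← Real.exp_add, ← Real.exp_add]; congr 1; ring
    have hDK : D = Real.exp (q₀ ^ 2 / 2) * (1 + Real.exp (-q₀ ^ 2)) := by
      rw [hDdef, mul_add, mul_one, ← Real.exp_add]
      congr 2
      ring
    have hreal : Cr ^ 2 / 4 *
        (Real.exp (2 * q₀ * x * Real.cos φ - q₀ ^ 2 * Real.cos φ ^ 2 + q₀ ^ 2 / 2)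
          + 2 * Real.cos (2 * q₀ * x * Real.sin φ)
            * Real.exp (q₀ ^ 2 / 2 - q₀ ^ 2 * Real.cos φ ^ 2)
          + Real.exp (-(2 * q₀ * x * Real.cos φ) - q₀ ^ 2 * Real.cos φ ^ 2 + q₀ ^ 2 / 2))
        = (Real.exp (-(x - q₀ * Real.cos φ) ^ 2) + Real.exp (-(x + q₀ * Real.cos φ) ^ 2) +
            2 * Real.cos (2 * q₀ * x * Real.sin φ)
              * Real.exp (-x ^ 2 - q₀ ^ 2 * Real.cos φ ^ 2)) /
          (2 * Real.sqrt Real.pi * (1 + Real.exp (-q₀ ^ 2))) := by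
      calc Cr ^ 2 / 4 *
          (Real.exp (2 * q₀ * x * Real.cos φ - q₀ ^ 2 * Real.cos φ ^ 2 + q₀ ^ 2 / 2)
            + 2 * Real.cos (2 * q₀ * x * Real.sin φ)
              * Real.exp (q₀ ^ 2 / 2 - q₀ ^ 2 * Real.cos φ ^ 2)
            + Real.exp (-(2 * q₀ * x * Real.cos φ) - q₀ ^ 2 * Real.cos φ ^ 2 + q₀ ^ 2 / 2))
          = (Real.exp (-x ^ 2)
              * Real.exp (2 * q₀ * x * Real.cos φ - q₀ ^ 2 * Real.cos φ ^ 2 + q₀ ^ 2 / 2)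
            + Real.exp (-x ^ 2)
              * Real.exp (-(2 * q₀ * x * Real.cos φ) - q₀ ^ 2 * Real.cos φ ^ 2 + q₀ ^ 2 / 2)
            + 2 * Real.cos (2 * q₀ * x * Real.sin φ)
              * (Real.exp (-x ^ 2) * Real.exp (q₀ ^ 2 / 2 - q₀ ^ 2 * Real.cos φ ^ 2)))
            / (2 * (Real.exp (q₀ ^ 2 / 2) * (1 + Real.exp (-q₀ ^ 2))) * Real.sqrt Real.pi) := by
            rw [hCr2, hDK]; field_simp; ring
        _ = Real.exp (q₀ ^ 2 / 2) *
              (Real.exp (-(x - q₀ * Real.cos φ) ^ 2) + Real.exp (-(x + q₀ * Real.cos φ) ^ 2) +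
              2 * Real.cos (2 * q₀ * x * Real.sin φ)
                * Real.exp (-x ^ 2 - q₀ ^ 2 * Real.cos φ ^ 2))
            / (Real.exp (q₀ ^ 2 / 2)
              * (2 * Real.sqrt Real.pi * (1 + Real.exp (-q₀ ^ 2)))) := by
            rw [h1, h2, h3]
            congr 1
            · ring
            · ring
        _ = _ := mul_div_mul_left _ _ hK
    norm_cast
  constructor
  · exact (hfn.mul_norm hgn).congr fun p => by rw [hterm p]
  · calc ∑' p : ℕ × ℕ,
        ((catCoeff q₀ p.1 p.2 * fock p.1 x * fock p.2 x : ℝ) : ℂ) *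
          Complex.exp (-Complex.I * (((p.2 : ℝ) - (p.1 : ℝ) : ℝ) : ℂ) * (φ : ℂ))
        = ∑' p : ℕ × ℕ, f p.1 * g p.2 := tsum_congr hterm
      _ = (∑' j, f j) * ∑' k, g k := (tsum_mul_tsum_of_summable_norm hfn hgn).symm
      _ = (starRingEnd ℂ) S * S := by rw [hSf.tsum_eq, hSg.tsum_eq]
      _ = _ := hfinal
end
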